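/- Let d ≥ 1, r = 1/(4d), H > 0, and let T = [0,H]^d with corners y_1,…,y_{2^d} indexed by {0,1}^d (y_1 the origin), φ_1,…,φ_{2^d} the multilinear (Q1) Lagrange basis functions of T with φ_i(y_j) = δ_{ij}, and T̂_ℓ = {z ∈ T : y_ℓ + (z − y_ℓ)/r ∈ T} the r-scaled corner box at y_ℓ. Then for any choice of points x_ℓ ∈ T̂_ℓ, ℓ = 1,…,2^d, the symmetric matrix G ∈ ℝ^{2^d × 2^d} with entries G_{ij} = Σ_{ℓ=1}^{2^d} φ_i(x_ℓ)φ_j(x_ℓ) has all eigenvalues bounded below by 11/8 − e^{1/4} > 0. -/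

import Mathlib

noncomputable section

namespace CubeQ1

variable {d : ℕ}

/-- The corner of the cube `[0,H]^d` selected by `b : Fin d → Bool`
(`b s = true` means the `s`-th coordinate is `H`). -/
def corner (H : ℝ) (b : Fin d → Bool) : Fin d → ℝ := fun s => if b s then H else 0

/-- The multilinear (Q1) Lagrange basis function of the cube `[0,H]^d`
associated with the corner `b`. -/
def q1 (H : ℝ) (b : Fin d → Bool) (z : Fin d → ℝ) : ℝ :=
  ∏ s, if b s then z s / H else 1 - z s / H

/-- The cube `T = [0,H]^d`. -/
def cube (d : ℕ) (H : ℝ) : Set (Fin d → ℝ) := {z | ∀ s, 0 ≤ z s ∧ z s ≤ H}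

/-- The `r`-scaled corner box `T̂_ℓ = {z ∈ T : y_ℓ + (z − y_ℓ)/r ∈ T}` at the
corner `y_ℓ` of `T = [0,H]^d`. -/
def cornerBox (H r : ℝ) (b : Fin d → Bool) : Set (Fin d → ℝ) :=
  {z | z ∈ cube d H ∧ ∀ s, 0 ≤ corner H b s + (z s - corner H b s) / r ∧
      corner H b s + (z s - corner H b s) / r ≤ H}

end CubeQ1

open CubeQ1

/-- Sum over all boolean vectors of a product factors as a product of sums. -/
private lemma sum_prod_bool {d : ℕ} (f : Fin d → Bool → ℝ) :
    ∑ b : Fin d → Bool, ∏ s, f s (b s) = ∏ s, (f s true + f s false) := by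
  rw [← Fintype.piFinset_univ, ← Finset.prod_univ_sum]
  exact Finset.prod_congr rfl fun s _ => by simp [add_comm]

/-- The Q1 basis functions form a partition of unity. -/
private lemma q1_partition {d : ℕ} (H : ℝ) (z : Fin d → ℝ) :
    ∑ b : Fin d → Bool, q1 H b z = 1 := by
  have h := sum_prod_bool (fun (s : Fin d) (c : Bool) =>
    if c then z s / H else 1 - z s / H)
  simp only [q1]
  rw [h]
  have : ∀ s : Fin d,
      ((if true then z s / H else 1 - z s / H) +
        (if false then z s / H else 1 - z s / H)) = 1 := by
    intro s; simp
  rw [Finset.prod_congr rfl fun s _ => this s, Finset.prod_const_one]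

set_option maxHeartbeats 1000000 in
/-- **Gershgorin bound for the corner Gram matrix (core of Lemma 3.5).**
For `d ≥ 1`, `r = 1/(4d)`, `H > 0` and any points `x_ℓ ∈ T̂_ℓ` in the
`r`-scaled corner boxes of `T = [0,H]^d`, the symmetric matrix
`G_{ij} = Σ_ℓ φ_i(x_ℓ) φ_j(x_ℓ)` built from the Q1 Lagrange basis functions
has all eigenvalues bounded below by `11/8 − e^{1/4} > 0`. -/
theorem corner_gram_matrix_eigenvalue_bound
    (d : ℕ) (hd : 1 ≤ d) (H : ℝ) (hH : 0 < H)
    (x : (Fin d → Bool) → (Fin d → ℝ))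
    (hx : ∀ b, x b ∈ cornerBox H (1 / (4 * (d : ℝ))) b)
    (G : Matrix (Fin d → Bool) (Fin d → Bool) ℝ)
    (hG : ∀ i j, G i j = ∑ ℓ : Fin d → Bool, q1 H i (x ℓ) * q1 H j (x ℓ)) :
    G.IsSymm ∧ (0 : ℝ) < 11 / 8 - Real.exp (1 / 4) ∧
      ∀ (lam : ℝ) (v : (Fin d → Bool) → ℝ), v ≠ 0 → G.mulVec v = lam • v →
        11 / 8 - Real.exp (1 / 4) ≤ lam := by
  set r : ℝ := 1 / (4 * (d : ℝ)) with hr_def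
  have hd1 : (1 : ℝ) ≤ (d : ℝ) := by exact_mod_cast hd
  have hd0 : (0 : ℝ) < (d : ℝ) := by linarith
  have hr0 : 0 < r := by rw [hr_def]; positivity
  have hrd : (d : ℝ) * r = 1 / 4 := by
    rw [hr_def]; field_simp
  have hr4 : r ≤ 1 / 4 := by
    rw [hr_def]
    rw [show (1:ℝ)/4 = 1/(4:ℝ) from rfl]
    exact one_div_le_one_div_of_le (by norm_num) (by linarith)
  -- basic coordinate bounds coming from the corner boxes
  have hcube : ∀ ℓ s, 0 ≤ x ℓ s ∧ x ℓ s ≤ H := fun ℓ s => (hx ℓ).1 s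
  have key : ∀ (ℓ : Fin d → Bool) (s : Fin d),
      (ℓ s = true → 1 - r ≤ x ℓ s / H) ∧ (ℓ s = false → x ℓ s / H ≤ r) := by
    intro ℓ s
    have h := (hx ℓ).2 s
    constructor
    · intro ht
      have hc : corner H ℓ s = H := by simp [corner, ht]
      rw [hc] at h
      have h1 : -H ≤ (x ℓ s - H) / r := by linarith [h.1]
      have h2 : -H * r ≤ x ℓ s - H := (le_div_iff₀ hr0).mp h1
      rw [le_div_iff₀ hH]
      nlinarith
    · intro hf
      have hc : corner H ℓ s = 0 := by simp [corner, hf]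
      rw [hc] at h
      have h1 : (x ℓ s - 0) / r ≤ H := by linarith [h.2]
      have h2 : x ℓ s - 0 ≤ H * r := (div_le_iff₀ hr0).mp h1
      rw [div_le_iff₀ hH]
      nlinarith
  -- the factors of q1
  have hF01 : ∀ (i ℓ : Fin d → Bool) (s : Fin d),
      0 ≤ (if i s then x ℓ s / H else 1 - x ℓ s / H) ∧
      (if i s then x ℓ s / H else 1 - x ℓ s / H) ≤ 1 := by
    intro i ℓ s
    have h0 := (hcube ℓ s).1
    have h1 := (hcube ℓ s).2
    have hA : 0 ≤ x ℓ s / H := div_nonneg h0 hH.le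
    have hB : x ℓ s / H ≤ 1 := (div_le_one hH).mpr h1
    cases hi : i s <;> simp [hi] <;> constructor <;> linarith
  have hFagree : ∀ (i ℓ : Fin d → Bool) (s : Fin d), i s = ℓ s →
      1 - r ≤ (if i s then x ℓ s / H else 1 - x ℓ s / H) := by
    intro i ℓ s he
    cases hi : i s
    · have hf : ℓ s = false := by rw [← he, hi]
      have := (key ℓ s).2 hf
      simp only [Bool.false_eq_true, if_false]
      linarith
    · have ht : ℓ s = true := by rw [← he, hi]
      have := (key ℓ s).1 ht
      simp only [hi, if_true]
      linarith
  have hFdis : ∀ (i ℓ : Fin d → Bool) (s : Fin d), i s ≠ ℓ s →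
      (if i s then x ℓ s / H else 1 - x ℓ s / H) ≤ r := by
    intro i ℓ s he
    cases hi : i s
    · have ht : ℓ s = true := by
        cases hl : ℓ s
        · exact absurd (hi.trans hl.symm) he
        · rfl
      have := (key ℓ s).1 ht
      simp only [Bool.false_eq_true, if_false]
      linarith
    · have hf : ℓ s = false := by
        cases hl : ℓ s
        · rfl
        · exact absurd (hi.trans hl.symm) he
      have := (key ℓ s).2 hf
      simp only [hi, if_true]
      linarith
  -- basic q1 facts
  have hp_nonneg : ∀ (i ℓ : Fin d → Bool), 0 ≤ q1 H i (x ℓ) := by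
    intro i ℓ
    exact Finset.prod_nonneg fun s _ => (hF01 i ℓ s).1
  -- diagonal lower bound
  have hdiag : ∀ i : Fin d → Bool, 3 / 4 ≤ q1 H i (x i) := by
    intro i
    have h1 : (1 - r) ^ d ≤ q1 H i (x i) := by
      calc (1 - r) ^ d = ∏ _s : Fin d, (1 - r) := by simp
        _ ≤ q1 H i (x i) := Finset.prod_le_prod (fun s _ => by linarith)
            (fun s _ => hFagree i i s rfl)
    have h2 : (3 / 4 : ℝ) ≤ (1 - r) ^ d := by
      calc (3 / 4 : ℝ) = 1 + (d : ℝ) * (-r) := by rw [mul_neg, hrd]; norm_num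
        _ ≤ (1 + -r) ^ d := one_add_mul_le_pow (by linarith) d
        _ = (1 - r) ^ d := by rw [← sub_eq_add_neg]
    linarith
  -- pointwise upper bound by products of r's
  have hbound : ∀ (i ℓ : Fin d → Bool),
      q1 H i (x ℓ) ≤ ∏ s, (if i s = ℓ s then (1 : ℝ) else r) := by
    intro i ℓ
    refine Finset.prod_le_prod (fun s _ => (hF01 i ℓ s).1) (fun s _ => ?_)
    by_cases he : i s = ℓ s
    · rw [if_pos he]
      exact (hF01 i ℓ s).2
    · rw [if_neg he]
      exact hFdis i ℓ s he
  have hboundsum : ∀ i : Fin d → Bool,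
      ∑ ℓ : Fin d → Bool, ∏ s, (if i s = ℓ s then (1 : ℝ) else r) = (1 + r) ^ d := by
    intro i
    have h := sum_prod_bool (fun (s : Fin d) (c : Bool) =>
      if i s = c then (1 : ℝ) else r)
    rw [h]
    have : ∀ s : Fin d,
        ((if i s = true then (1:ℝ) else r) + (if i s = false then (1:ℝ) else r))
          = 1 + r := by
      intro s; cases hi : i s <;> simp [hi, add_comm]
    rw [Finset.prod_congr rfl fun s _ => this s, Finset.prod_const]
    simp
  have hexp : (1 + r) ^ d ≤ Real.exp (1 / 4) := by
    have e1 : 1 + r ≤ Real.exp r := by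
      have := Real.add_one_le_exp r; linarith
    have e2 : (1 + r) ^ d ≤ (Real.exp r) ^ d :=
      pow_le_pow_left₀ (by linarith) e1 d
    have e3 : (Real.exp r) ^ d = Real.exp ((d : ℝ) * r) :=
      (Real.exp_nat_mul r d).symm
    rw [e3, hrd] at e2
    exact e2
  -- off-diagonal row sum bound
  have hoffsum : ∀ i : Fin d → Bool,
      ∑ ℓ ∈ Finset.univ.erase i, q1 H i (x ℓ) ≤ Real.exp (1 / 4) - 1 := by
    intro i
    have h1 : ∑ ℓ ∈ Finset.univ.erase i, q1 H i (x ℓ) ≤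
        ∑ ℓ ∈ Finset.univ.erase i, ∏ s, (if i s = ℓ s then (1 : ℝ) else r) :=
      Finset.sum_le_sum fun ℓ _ => hbound i ℓ
    have h2 : ∑ ℓ ∈ Finset.univ.erase i, ∏ s, (if i s = ℓ s then (1 : ℝ) else r)
        = (1 + r) ^ d - 1 := by
      rw [Finset.sum_erase_eq_sub (Finset.mem_univ i), hboundsum i]
      simp
    linarith [hexp]
  -- positivity of the constant
  have hconst : (0 : ℝ) < 11 / 8 - Real.exp (1 / 4) := by
    have h4 : Real.exp (1 / 4 : ℝ) ^ 4 = Real.exp 1 := by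
      rw [← Real.exp_nat_mul]; norm_num
    have he1 := Real.exp_one_lt_d9
    have h2 : Real.exp (1 / 4 : ℝ) ^ 4 < (11 / 8 : ℝ) ^ 4 := by
      rw [h4]; nlinarith
    have := lt_of_pow_lt_pow_left₀ 4 (by norm_num : (0:ℝ) ≤ 11/8) h2
    linarith
  -- symmetry
  have hsymm : G.IsSymm := by
    ext i j
    rw [Matrix.transpose_apply, hG, hG]
    exact Finset.sum_congr rfl fun ℓ _ => mul_comm _ _
  refine ⟨hsymm, hconst, ?_⟩
  intro lam v hv hev
  -- pick the coordinate of maximal absolute value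
  obtain ⟨i, -, hi⟩ := Finset.exists_max_image Finset.univ (fun j => |v j|)
    ⟨default, Finset.mem_univ _⟩
  have hvi : 0 < |v i| := by
    rcases Function.ne_iff.mp hv with ⟨j, hj⟩
    exact lt_of_lt_of_le (abs_pos.mpr hj) (hi j (Finset.mem_univ j))
  have heq : ∑ j, G i j * v j = lam * v i := by
    have := congrFun hev i
    simpa [Matrix.mulVec, dotProduct] using this
  have hGnonneg : ∀ j, 0 ≤ G i j := by
    intro j
    rw [hG]
    exact Finset.sum_nonneg fun ℓ _ => mul_nonneg (hp_nonneg i ℓ) (hp_nonneg j ℓ)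
  have hsplit : lam * v i - G i i * v i = ∑ j ∈ Finset.univ.erase i, G i j * v j := by
    rw [Finset.sum_erase_eq_sub (Finset.mem_univ i), heq]
  -- Gershgorin estimate
  have habs : |lam - G i i| * |v i| ≤ (∑ j ∈ Finset.univ.erase i, G i j) * |v i| := by
    calc |lam - G i i| * |v i| = |(lam - G i i) * v i| := (abs_mul _ _).symm
      _ = |∑ j ∈ Finset.univ.erase i, G i j * v j| := by rw [sub_mul, hsplit]
      _ ≤ ∑ j ∈ Finset.univ.erase i, |G i j * v j| :=
          Finset.abs_sum_le_sum_abs _ _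
      _ ≤ ∑ j ∈ Finset.univ.erase i, G i j * |v i| := by
          refine Finset.sum_le_sum fun j _ => ?_
          rw [abs_mul, abs_of_nonneg (hGnonneg j)]
          exact mul_le_mul_of_nonneg_left (hi j (Finset.mem_univ j)) (hGnonneg j)
      _ = (∑ j ∈ Finset.univ.erase i, G i j) * |v i| := (Finset.sum_mul _ _ _).symm
  have h1 : |lam - G i i| ≤ ∑ j ∈ Finset.univ.erase i, G i j :=
    le_of_mul_le_mul_right habs hvi
  have h2 : G i i - lam ≤ |lam - G i i| := by
    rw [abs_sub_comm]; exact le_abs_self _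
  have hger : G i i - ∑ j ∈ Finset.univ.erase i, G i j ≤ lam := by linarith
  -- now the quantitative bound
  have hrowG : ∑ j, G i j = ∑ ℓ : Fin d → Bool, q1 H i (x ℓ) := by
    simp_rw [hG]
    rw [Finset.sum_comm]
    refine Finset.sum_congr rfl fun ℓ _ => ?_
    rw [← Finset.mul_sum, q1_partition, mul_one]
  have hGii : G i i = ∑ ℓ : Fin d → Bool, q1 H i (x ℓ) ^ 2 := by
    rw [hG]; exact Finset.sum_congr rfl fun ℓ _ => (sq _).symm
  have herase : ∑ j ∈ Finset.univ.erase i, G i j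
      = (∑ ℓ : Fin d → Bool, q1 H i (x ℓ)) - G i i := by
    rw [Finset.sum_erase_eq_sub (Finset.mem_univ i), hrowG]
  have hmain : 11 / 8 - Real.exp (1 / 4) ≤
      G i i - ∑ j ∈ Finset.univ.erase i, G i j := by
    rw [herase, hGii]
    have hsum : ∑ ℓ : Fin d → Bool, (2 * q1 H i (x ℓ) ^ 2 - q1 H i (x ℓ))
        = (2 * q1 H i (x i) ^ 2 - q1 H i (x i))
          + ∑ ℓ ∈ Finset.univ.erase i, (2 * q1 H i (x ℓ) ^ 2 - q1 H i (x ℓ)) :=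
      (Finset.add_sum_erase _ _ (Finset.mem_univ i)).symm
    have hA : (3/8 : ℝ) ≤ 2 * q1 H i (x i) ^ 2 - q1 H i (x i) := by
      nlinarith [hdiag i]
    have hB : -(Real.exp (1/4) - 1)
        ≤ ∑ ℓ ∈ Finset.univ.erase i, (2 * q1 H i (x ℓ) ^ 2 - q1 H i (x ℓ)) := by
      have hpt : ∀ ℓ ∈ Finset.univ.erase i,
          -(q1 H i (x ℓ)) ≤ 2 * q1 H i (x ℓ) ^ 2 - q1 H i (x ℓ) := by
        intro ℓ _; nlinarith [hp_nonneg i ℓ]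
      calc -(Real.exp (1/4) - 1)
          ≤ -(∑ ℓ ∈ Finset.univ.erase i, q1 H i (x ℓ)) := by linarith [hoffsum i]
        _ = ∑ ℓ ∈ Finset.univ.erase i, -(q1 H i (x ℓ)) := by
            rw [← Finset.sum_neg_distrib]
        _ ≤ _ := Finset.sum_le_sum hpt
    have hexpand : ∑ ℓ : Fin d → Bool, (2 * q1 H i (x ℓ) ^ 2 - q1 H i (x ℓ))
        = 2 * (∑ ℓ : Fin d → Bool, q1 H i (x ℓ) ^ 2)
          - ∑ ℓ : Fin d → Bool, q1 H i (x ℓ) := by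
      rw [Finset.sum_sub_distrib, Finset.mul_sum]
    rw [hexpand] at hsum
    linarith [hA, hB]
  linarith [hger, hmain]
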